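/- Let n ≥ 2 and 1 ≤ k ≤ n−1, let u¹,…,uᵐ ∈ ℝⁿ (unit vectors) with weights λ₁,…,λₘ > 0 form a John decomposition, and let s > 0. Let E be the k-ellipsoid with orthonormal axis directions v¹,…,vᵏ, center c and semi-axes α₁,…,α_k > 0, and suppose −s ≤ ⟨x,uᵢ⟩ ≤ 1 for every x ∈ E and every i (i.e., E is contained in the polyhedron P = ⋂ᵢ{x : ⟨x,uᵢ⟩ ≤ 1} and in −s·P). Then ∏ⱼ αⱼ ≤ (n(s+1)/(2k))^{k/2}. Moreover, if equality holds, then: (i) αⱼ = √(n(s+1)/(2k)) for every j; (ii) ‖c‖² = n(s−1)/2, ⟨c,vⱼ⟩ = 0 for every j ∈ {1,…,k}, and for every i either ⟨c,uᵢ⟩ = 1 or ⟨c,uᵢ⟩ = (1−s)/2; and (iii) s ≤ 1 or s ≥ 1 + 2/n. -/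

import Mathlib

open scoped InnerProductSpace BigOperators

set_option maxHeartbeats 1000000 in
/-- asymmetry-dependent upper bound for inscribed ellipsoids
(Lemma 3.6 of the paper), with necessary conditions for equality. -/
theorem stmt5 (n k : ℕ) (hn : 2 ≤ n) (hk : 1 ≤ k) (hkn : k ≤ n - 1)
    (m : ℕ) (u : Fin m → EuclideanSpace ℝ (Fin n)) (lam : Fin m → ℝ)
    (hu : ∀ i, ‖u i‖ = 1) (hlam : ∀ i, 0 < lam i)
    (hsum : ∑ i, lam i • u i = 0)
    (hdecomp : ∀ x : EuclideanSpace ℝ (Fin n), ∑ i, (lam i * ⟪u i, x⟫_ℝ) • u i = x)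
    (s : ℝ) (hs : 0 < s)
    (v : Fin k → EuclideanSpace ℝ (Fin n)) (hv : Orthonormal ℝ v)
    (c : EuclideanSpace ℝ (Fin n))
    (α : Fin k → ℝ) (hα : ∀ j, 0 < α j)
    (Eell : Set (EuclideanSpace ℝ (Fin n)))
    (hEell : Eell = {x | ∃ t : Fin k → ℝ,
      ∑ j, (t j) ^ 2 / (α j) ^ 2 ≤ 1 ∧ x = c + ∑ j, t j • v j})
    (hEP : ∀ x ∈ Eell, ∀ i, -s ≤ ⟪x, u i⟫_ℝ ∧ ⟪x, u i⟫_ℝ ≤ 1) :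
    ∏ j, α j ≤ Real.sqrt ((n : ℝ) * (s + 1) / (2 * k)) ^ k ∧
    (∏ j, α j = Real.sqrt ((n : ℝ) * (s + 1) / (2 * k)) ^ k →
      (∀ j, α j = Real.sqrt ((n : ℝ) * (s + 1) / (2 * k))) ∧
      ‖c‖ ^ 2 = (n : ℝ) * (s - 1) / 2 ∧
      (∀ j, ⟪c, v j⟫_ℝ = 0) ∧
      (∀ i, ⟪c, u i⟫_ℝ = 1 ∨ ⟪c, u i⟫_ℝ = (1 - s) / 2) ∧
      (s ≤ 1 ∨ 1 + 2 / (n : ℝ) ≤ s)) := by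
  have hn0 : (0:ℝ) < (n:ℝ) := by positivity
  have hk0 : (0:ℝ) < (k:ℝ) := by exact_mod_cast hk
  set ci : Fin m → ℝ := fun i => ⟪c, u i⟫_ℝ with hci_def
  set w : Fin m → Fin k → ℝ := fun i j => ⟪u i, v j⟫_ℝ with hw_def
  set Q : Fin m → ℝ := fun i => ∑ j, (α j)^2 * (w i j)^2 with hQ_def
  have hQnn : ∀ i, 0 ≤ Q i := fun i => Finset.sum_nonneg fun j _ => by positivity
  -- membership helper
  have hmem : ∀ t : Fin k → ℝ, (∑ j, (t j)^2/(α j)^2 ≤ 1) → ∀ i,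
      -s ≤ ci i + ∑ j, t j * w i j ∧ ci i + ∑ j, t j * w i j ≤ 1 := by
    intro t ht i
    have hx : (c + ∑ j, t j • v j) ∈ Eell := by
      rw [hEell]; exact ⟨t, ht, rfl⟩
    have h := hEP _ hx i
    have hinner : ⟪c + ∑ j, t j • v j, u i⟫_ℝ = ci i + ∑ j, t j * w i j := by
      rw [inner_add_left, sum_inner]
      congr 1
      refine Finset.sum_congr rfl fun j _ => ?_
      rw [real_inner_smul_left, real_inner_comm]
    rwa [hinner] at h
  set R : Fin m → ℝ := fun i => Real.sqrt (Q i) with hR_def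
  have hR2 : ∀ i, (R i)^2 = Q i := fun i => Real.sq_sqrt (hQnn i)
  have hRnn : ∀ i, 0 ≤ R i := fun i => Real.sqrt_nonneg _
  have hRle : ∀ i, ci i + R i ≤ 1 ∧ -s ≤ ci i - R i := by
    intro i
    by_cases hQ0 : Q i = 0
    · have hR0 : R i = 0 := by rw [hR_def]; simp [hQ0]
      have h := hmem 0 (by simp) i
      simp only [Pi.zero_apply, zero_mul, Finset.sum_const_zero, add_zero] at h
      constructor
      · rw [hR0]; simpa using h.2
      · rw [hR0]; simpa using h.1
    · have hQpos : 0 < Q i := lt_of_le_of_ne (hQnn i) (Ne.symm hQ0)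
      have hRpos : 0 < R i := Real.sqrt_pos.mpr hQpos
      have key : ∀ ε : ℝ, ε = 1 ∨ ε = -1 →
          -s ≤ ci i + ε * R i ∧ ci i + ε * R i ≤ 1 := by
        intro ε hε
        set t : Fin k → ℝ := fun j => ε * ((α j)^2 * w i j) / R i with ht_def
        have ht : ∑ j, (t j)^2/(α j)^2 ≤ 1 := by
          have hsum' : ∑ j, (t j)^2/(α j)^2 = Q i / (R i)^2 := by
            rw [hQ_def]
            simp only
            rw [Finset.sum_div]
            refine Finset.sum_congr rfl fun j _ => ?_
            have hαj := (hα j).ne'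
            have hR0 : R i ≠ 0 := hRpos.ne'
            have hε2 : ε^2 = 1 := by rcases hε with h | h <;> rw [h] <;> ring
            rw [ht_def]
            simp only
            rw [div_pow, mul_pow, hε2, one_mul]
            field_simp
          rw [hsum', hR2 i, div_self hQ0]
        have hlin : ∑ j, t j * w i j = ε * R i := by
          have : ∑ j, t j * w i j = ε * (Q i / R i) := by
            rw [hQ_def]
            simp only
            rw [mul_div_assoc' , Finset.mul_sum, Finset.sum_div]
            refine Finset.sum_congr rfl fun j _ => ?_
            rw [ht_def]
            ring
          rw [this]
          rw [← hR2 i]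
          field_simp
        have h := hmem t ht i
        rw [hlin] at h
        exact h
      have h1 := key 1 (Or.inl rfl)
      have h2 := key (-1) (Or.inr rfl)
      constructor <;> [linarith [h1.2]; linarith [h2.1]]
  -- John decomposition identities
  have F1 : ∀ x : EuclideanSpace ℝ (Fin n), ∑ i, lam i * (⟪u i, x⟫_ℝ)^2 = ‖x‖^2 := by
    intro x
    have h := congrArg (fun y => ⟪y, x⟫_ℝ) (hdecomp x)
    rw [sum_inner] at h
    rw [real_inner_self_eq_norm_sq] at h
    rw [← h]
    refine Finset.sum_congr rfl fun i _ => ?_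
    rw [real_inner_smul_left]
    ring
  have F3 : ∑ i, lam i * ci i = 0 := by
    have h := congrArg (fun y => ⟪y, c⟫_ℝ) hsum
    simp only [inner_zero_left] at h
    rw [sum_inner] at h
    rw [← h]
    refine Finset.sum_congr rfl fun i _ => ?_
    rw [real_inner_smul_left, real_inner_comm]
  have F2 : ∑ i, lam i = (n : ℝ) := by
    have hcoord : ∀ (i : Fin m) (a : Fin n), ⟪u i, EuclideanSpace.single a (1:ℝ)⟫_ℝ = u i a := by
      intro i a
      rw [EuclideanSpace.inner_single_right]
      simp
    have hself : ∀ i : Fin m, ∑ a, (u i a)^2 = 1 := by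
      intro i
      have h := real_inner_self_eq_norm_sq (u i)
      rw [hu i] at h
      rw [PiLp.inner_apply] at h
      simp only [RCLike.inner_apply, starRingEnd_apply, star_trivial, one_pow] at h
      rw [← h]
      exact Finset.sum_congr rfl fun a _ => (sq (u i a)).symm ▸ by ring
    have hswap : ∑ a : Fin n, ∑ i, lam i * (u i a)^2 = ∑ i, lam i := by
      rw [Finset.sum_comm]
      refine Finset.sum_congr rfl fun i _ => ?_
      rw [← Finset.mul_sum, hself i, mul_one]
    have heach : ∀ a : Fin n, ∑ i, lam i * (u i a)^2 = 1 := by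
      intro a
      have h := F1 (EuclideanSpace.single a (1:ℝ))
      simp only [hcoord] at h
      rw [h]
      rw [EuclideanSpace.norm_single]
      norm_num
    rw [← hswap]
    simp only [heach]
    simp
  have F4 : ∑ i, lam i * (ci i)^2 = ‖c‖^2 := by
    rw [← F1 c]
    refine Finset.sum_congr rfl fun i _ => ?_
    have hcomm : ⟪u i, c⟫_ℝ = ci i := by
      simp only [hci_def]; exact real_inner_comm _ _
    rw [hcomm]
  have F5 : ∑ i, lam i * Q i = ∑ j, (α j)^2 := by
    rw [hQ_def]
    simp only [Finset.mul_sum]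
    rw [Finset.sum_comm]
    refine Finset.sum_congr rfl fun j _ => ?_
    have : ∑ i, lam i * ((α j)^2 * (w i j)^2) = (α j)^2 * ∑ i, lam i * (w i j)^2 := by
      rw [Finset.mul_sum]
      exact Finset.sum_congr rfl fun i _ => by ring
    rw [this, F1 (v j), hv.1 j]
    norm_num
    -- per-i bound Q i ≤ (s+1)(1-ci)/2
  have hbounds : ∀ i : Fin m, R i ≤ 1 - ci i ∧ R i ≤ s + ci i := by
    intro i
    have h1 := (hRle i).1
    have h2 := (hRle i).2
    exact ⟨by linarith, by linarith⟩
  have hsq1 : ∀ i : Fin m, (R i)^2 ≤ (1 - ci i)^2 := by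
    intro i
    have := (hbounds i).1
    nlinarith [hRnn i]
  have hsq2 : ∀ i : Fin m, (R i)^2 ≤ (1 - ci i) * (s + ci i) := by
    intro i
    have h1 := (hbounds i).1
    have h2 := (hbounds i).2
    nlinarith [hRnn i]
  have hQle : ∀ i : Fin m, Q i ≤ (s+1)*(1 - ci i)/2 := by
    intro i
    have h1 := hsq1 i
    have h2 := hsq2 i
    have h3 := hR2 i
    nlinarith
  set S : ℝ := ∑ j, (α j)^2 with hS_def
  set g : Fin m → ℝ := fun i => (s+1)*(1 - ci i)/2 with hg_def
  have hsumg : ∑ i, lam i * g i = (n:ℝ)*(s+1)/2 := by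
    have hexp : ∑ i, lam i * g i
        = (s+1)/2 * (∑ i, lam i) - (s+1)/2 * (∑ i, lam i * ci i) := by
      rw [Finset.mul_sum, Finset.mul_sum, ← Finset.sum_sub_distrib]
      refine Finset.sum_congr rfl fun i _ => ?_
      simp only [hg_def]
      ring
    rw [hexp, F2, F3]
    ring
  have hlamQle : ∀ i ∈ Finset.univ, lam i * Q i ≤ lam i * g i := fun i _ =>
    mul_le_mul_of_nonneg_left (hQle i) (hlam i).le
  have hSle : S ≤ (n:ℝ)*(s+1)/2 := by
    have h := Finset.sum_le_sum hlamQle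
    rw [F5, hsumg] at h
    exact h
  set T : ℝ := (n:ℝ)*(s+1)/(2*(k:ℝ)) with hT_def
  have hT : 0 < T := by rw [hT_def]; positivity
  have hkT : (k:ℝ)*T = (n:ℝ)*(s+1)/2 := by
    rw [hT_def]
    field_simp
  have hSkT : S ≤ (k:ℝ)*T := by rw [hkT]; exact hSle
  -- exponential AM-GM
  have hexple : ∀ j : Fin k, (α j)^2 ≤ T * Real.exp ((α j)^2/T - 1) := by
    intro j
    have h := Real.add_one_le_exp ((α j)^2/T - 1)
    have h2 : (α j)^2/T ≤ Real.exp ((α j)^2/T - 1) := by linarith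
    calc (α j)^2 = T * ((α j)^2/T) := by field_simp
    _ ≤ T * Real.exp ((α j)^2/T - 1) := mul_le_mul_of_nonneg_left h2 hT.le
  have hprodexp : ∏ j, (T * Real.exp ((α j)^2/T - 1))
      = T^k * Real.exp (S/T - (k:ℝ)) := by
    rw [Finset.prod_mul_distrib, Finset.prod_const, ← Real.exp_sum]
    congr 2
    · simp [Finset.card_univ]
    · rw [Finset.sum_sub_distrib, ← Finset.sum_div]
      simp [hS_def, Finset.card_univ]
  have hchain : ∏ j, (α j)^2 ≤ T^k * Real.exp (S/T - (k:ℝ)) := by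
    rw [← hprodexp]
    exact Finset.prod_le_prod (fun j _ => by positivity) (fun j _ => hexple j)
  have hexpo : Real.exp (S/T - (k:ℝ)) ≤ 1 := by
    rw [Real.exp_le_one_iff]
    have h : S/T ≤ (k:ℝ) := by
      rw [div_le_iff₀ hT]
      linarith [hSkT]
    linarith
  have hprodsq : ∏ j, (α j)^2 ≤ T^k := by
    calc ∏ j, (α j)^2 ≤ T^k * Real.exp (S/T - (k:ℝ)) := hchain
    _ ≤ T^k * 1 := mul_le_mul_of_nonneg_left hexpo (by positivity)
    _ = T^k := mul_one _
  have hsqTpow : ((Real.sqrt T)^k)^2 = T^k := by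
    rw [← pow_mul, mul_comm, pow_mul, Real.sq_sqrt hT.le]
  have hprodpow : (∏ j, α j)^2 = ∏ j, (α j)^2 := by rw [← Finset.prod_pow]
  have hpnn : 0 ≤ ∏ j, α j := Finset.prod_nonneg fun j _ => (hα j).le
  have hmain : ∏ j, α j ≤ Real.sqrt T ^ k := by
    have h2 : (∏ j, α j)^2 ≤ ((Real.sqrt T)^k)^2 := by
      rw [hprodpow, hsqTpow]; exact hprodsq
    have h3 := Real.sqrt_le_sqrt h2
    rwa [Real.sqrt_sq hpnn, Real.sqrt_sq (by positivity)] at h3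
  refine ⟨hmain, ?_⟩
  intro heq
  -- equality analysis
  have hprodT : ∏ j, (α j)^2 = T^k := by rw [← hprodpow, heq, hsqTpow]
  have hSeq : S = (k:ℝ)*T := by
    have h1 : T^k ≤ T^k * Real.exp (S/T - (k:ℝ)) := hprodT ▸ hchain
    have hTk : 0 < T^k := by positivity
    have h2 : (1:ℝ) ≤ Real.exp (S/T - (k:ℝ)) := by
      have := (mul_le_mul_iff_right₀ hTk).mp (by linarith : T^k * 1 ≤ T^k * Real.exp (S/T - (k:ℝ)))
      exact this
    have h3 : (0:ℝ) ≤ S/T - (k:ℝ)  := Real.one_le_exp_iff.mp h2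
    have h4 : (k:ℝ)*T ≤ S := by
      have : (k:ℝ) ≤ S/T := by linarith
      exact (le_div_iff₀ hT).mp this
    linarith [hSkT]
  have hallT : ∀ j, (α j)^2 = T := by
    by_contra hcon
    push_neg at hcon
    obtain ⟨j0, hj0⟩ := hcon
    have hx : (α j0)^2/T - 1 ≠ 0 := by
      intro h0
      apply hj0
      have h1 : (α j0)^2/T = 1 := by linarith
      exact (div_eq_one_iff_eq hT.ne').mp h1
    have hstrict : (α j0)^2 < T * Real.exp ((α j0)^2/T - 1) := by
      have h := Real.add_one_lt_exp hx
      have h2 : (α j0)^2/T < Real.exp ((α j0)^2/T - 1) := by linarith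
      calc (α j0)^2 = T * ((α j0)^2/T) := by field_simp
      _ < T * Real.exp ((α j0)^2/T - 1) := (mul_lt_mul_iff_right₀ hT).mpr h2
    have hlt : ∏ j, (α j)^2 < ∏ j, (T * Real.exp ((α j)^2/T - 1)) :=
      Finset.prod_lt_prod (fun j _ => pow_pos (hα j) 2) (fun j _ => hexple j)
        ⟨j0, Finset.mem_univ _, hstrict⟩
    rw [hprodexp, hSeq] at hlt
    have hz : (k:ℝ)*T/T - (k:ℝ) = 0 := by field_simp; ring
    rw [hz, Real.exp_zero, mul_one] at hlt
    exact absurd hprodT (ne_of_lt hlt)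
  have hαT : ∀ j, α j = Real.sqrt T := by
    intro j
    rw [← Real.sqrt_sq (hα j).le, hallT j]
  -- per-i equality Q i = g i
  have hQeq : ∀ i, Q i = g i := by
    have hsum_eq : ∑ i, lam i * Q i = ∑ i, lam i * g i := by
      rw [F5, hsumg, hSeq, hkT]
    intro i
    have h := (Finset.sum_eq_sum_iff_of_le hlamQle).mp hsum_eq i (Finset.mem_univ i)
    exact mul_left_cancel₀ (hlam i).ne' h
  -- key per-i facts
  have hkey : ∀ i : Fin m, Q i = (1 - ci i)^2 ∧ (ci i = 1 ∨ ci i = (1-s)/2) := by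
    intro i
    have h3 := hsq1 i
    have h4 := hsq2 i
    have h5 := hR2 i
    have e1 : (1 - ci i)^2 + (1 - ci i)*(s + ci i) = 2 * Q i := by
      rw [hQeq i]
      simp only [hg_def]
      ring
    have hA : (1 - ci i)^2 = (R i)^2 := by linarith
    have hB : (1 - ci i)*(s + ci i) = (R i)^2 := by linarith
    have hfac : (1 - ci i) * ((1 - ci i) - (s + ci i)) = 0 := by
      linear_combination hA - hB
    constructor
    · rw [← h5, ← hA]
    · rcases mul_eq_zero.mp hfac with h0 | h0
      · left; linarith
      · right; linarith
  have hw0 : ∀ i, ci i = 1 → ∀ j, w i j = 0 := by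
    intro i hci1 j
    have hQ0 : Q i = 0 := by
      rw [(hkey i).1, hci1]
      ring
    have hterms : ∀ j ∈ Finset.univ, (0:ℝ) ≤ (α j)^2 * (w i j)^2 :=
      fun j _ => by positivity
    have hz := (Finset.sum_eq_zero_iff_of_nonneg hterms).mp (by rw [← hQ_def] at *; exact hQ0) j (Finset.mem_univ j)
    have hαj := (hα j).ne'
    rcases mul_eq_zero.mp hz with h0 | h0
    · exact absurd h0 (by positivity)
    · exact pow_eq_zero_iff (Nat.succ_ne_zero 1) |>.mp h0
  have hsumw : ∀ j, ∑ i, lam i * w i j = 0 := by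
    intro j
    have h := congrArg (fun y => ⟪y, v j⟫_ℝ) hsum
    simp only [inner_zero_left] at h
    rw [sum_inner] at h
    rw [← h]
    exact Finset.sum_congr rfl fun i _ => by rw [real_inner_smul_left]
  have hcv : ∀ j, ⟪c, v j⟫_ℝ = 0 := by
    intro j
    have h := congrArg (fun y => ⟪c, y⟫_ℝ) (hdecomp (v j))
    rw [inner_sum] at h
    have h2 : ∑ i, (lam i * w i j) * ci i = ⟪c, v j⟫_ℝ := by
      rw [← h]
      refine Finset.sum_congr rfl fun i _ => ?_
      rw [real_inner_smul_right]
    rw [← h2]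
    have h3 : ∀ i, (lam i * w i j) * ci i = (1-s)/2 * (lam i * w i j) := by
      intro i
      rcases (hkey i).2 with h1 | h1
      · rw [hw0 i h1 j]; ring
      · rw [h1]; ring
    calc ∑ i, (lam i * w i j) * ci i = ∑ i, (1-s)/2 * (lam i * w i j) :=
          Finset.sum_congr rfl fun i _ => h3 i
    _ = (1-s)/2 * ∑ i, lam i * w i j := by rw [Finset.mul_sum]
    _ = 0 := by rw [hsumw j]; ring
  have hnorm : ‖c‖^2 = (n:ℝ)*(s-1)/2 := by
    have h1 : ∑ i, lam i * Q i = (n:ℝ)*(s+1)/2 := by rw [F5, hSeq, hkT]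
    have h2 : ∑ i, lam i * Q i
        = ∑ i, (lam i - 2*(lam i * ci i) + lam i * (ci i)^2) := by
      refine Finset.sum_congr rfl fun i _ => ?_
      rw [(hkey i).1]
      ring
    rw [h2] at h1
    rw [Finset.sum_add_distrib, Finset.sum_sub_distrib, ← Finset.mul_sum] at h1
    rw [F2, F3, F4] at h1
    linarith
  refine ⟨hαT, hnorm, hcv, fun i => (hkey i).2, ?_⟩
  by_cases hs1 : s ≤ 1
  · exact Or.inl hs1
  · push_neg at hs1
    right
    by_cases hex : ∃ i, ci i = 1
    · obtain ⟨i0, hi0⟩ := hex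
      have hle : ci i0 ≤ ‖c‖ := by
        have h := real_inner_le_norm c (u i0)
        rw [hu i0, mul_one] at h
        exact h
      have h1 : (1:ℝ) ≤ ‖c‖ := hi0 ▸ hle
      have h2 : (1:ℝ) ≤ ‖c‖^2 := by nlinarith
      rw [hnorm] at h2
      have h4 : 2/(n:ℝ) ≤ s - 1 := by
        rw [div_le_iff₀ hn0]
        nlinarith
      linarith
    · push_neg at hex
      exfalso
      have hall : ∀ i, ci i = (1-s)/2 := fun i => ((hkey i).2).resolve_left (hex i)
      have hz : ∑ i, lam i * ci i = (1-s)/2 * ∑ i, lam i := by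
        rw [Finset.mul_sum]
        exact Finset.sum_congr rfl fun i _ => by rw [hall i]; ring
      rw [F3, F2] at hz
      have hneg : (1-s)/2 * (n:ℝ) < 0 :=
        mul_neg_of_neg_of_pos (by linarith) hn0
      linarith
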